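/- If a complex polynomial f of degree n satisfies f(εz) = α·f(z) + β for all z, where ε is a primitive b-th root of unity and α, β ∈ ℂ, then α = ε^a where a is the remainder of n modulo b, and there exists a polynomial R with f(z) = z^a·R(z^b) + f(0). -/

import Mathlib

open Polynomial

lemma coeff_comp_C_mul_X (p : Polynomial ℂ) (c : ℂ) (k : ℕ) :
    (p.comp (C c * X)).coeff k = c ^ k * p.coeff k := by
  rw [comp, eval₂_eq_sum, Polynomial.sum_def, finset_sum_coeff]
  have : ∀ i ∈ p.support, (C (p.coeff i) * (C c * X) ^ i).coeff k
      = if i = k then c ^ k * p.coeff k else 0 := by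
    intro i _
    rw [mul_pow, ← C_pow, ← mul_assoc, ← C_mul, coeff_C_mul, coeff_X_pow]
    by_cases hik : i = k
    · subst hik; simp; ring
    · rw [if_neg hik, if_neg (fun h => hik h.symm), mul_zero]
  rw [Finset.sum_congr rfl this, Finset.sum_ite_eq' p.support k]
  split_ifs with hk
  · rfl
  · simp [Polynomial.notMem_support_iff.mp hk]

theorem stmt_11 (f : Polynomial ℂ) (n : ℕ) (hn : f.natDegree = n) (hn1 : 1 ≤ n)
    (b : ℕ) (hb : 1 ≤ b) (ε : ℂ) (hε : IsPrimitiveRoot ε b) (α β : ℂ)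
    (h : ∀ z : ℂ, f.eval (ε * z) = α * f.eval z + β) :
    α = ε ^ (n % b) ∧
      ∃ R : Polynomial ℂ,
        f = X ^ (n % b) * R.comp (X ^ b) + C (f.eval 0) := by
  have hord : orderOf ε = b := hε.eq_orderOf.symm
  have hpoly : f.comp (C ε * X) = C α * f + C β := by
    apply Polynomial.funext
    intro z
    simp [eval_comp, h z]
  have hcoeff : ∀ k : ℕ, ε ^ k * f.coeff k = α * f.coeff k + (if k = 0 then β else 0) := by
    intro k
    have := congrArg (fun p => p.coeff k) hpoly
    simp only [coeff_comp_C_mul_X, coeff_add, coeff_C_mul, coeff_C] at this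
    exact this
  have hf0 : f ≠ 0 := by
    intro h0; rw [h0, natDegree_zero] at hn; omega
  have hcn : f.coeff n ≠ 0 := by
    rw [← hn]; exact mt Polynomial.leadingCoeff_eq_zero.mp hf0
  have hαn : α = ε ^ n := by
    have h1 := hcoeff n
    rw [if_neg (by omega), add_zero] at h1
    exact (mul_right_cancel₀ hcn h1).symm
  have hred : ∀ k : ℕ, ε ^ k = ε ^ (k % b) := by
    intro k
    conv_lhs => rw [← Nat.div_add_mod k b]
    rw [pow_add, pow_mul, hε.pow_eq_one, one_pow, one_mul]
  have hpow : ∀ k l : ℕ, ε ^ k = ε ^ l → k % b = l % b := by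
    intro k l he
    rw [hred k, hred l] at he
    exact hε.pow_inj (Nat.mod_lt _ hb) (Nat.mod_lt _ hb) he
  have hα : α = ε ^ (n % b) := by rw [hαn, hred n]
  refine ⟨hα, ?_⟩
  set a := n % b with ha
  set g := f - C (f.eval 0) with hg
  have hab : a < b := Nat.mod_lt n hb
  -- supports of g lie in residue class a mod b
  have hsupp : ∀ k, g.coeff k ≠ 0 → k % b = a := by
    intro k hk
    rcases Nat.eq_zero_or_pos k with rfl | hk1
    · exfalso; apply hk
      simp [hg, coeff_sub, coeff_C, Polynomial.coeff_zero_eq_eval_zero]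
    · have hgk : g.coeff k = f.coeff k := by
        rw [hg, coeff_sub, coeff_C, if_neg (by omega : ¬ k = 0), sub_zero]
      rw [hgk] at hk
      have h1 := hcoeff k
      rw [if_neg (by omega), add_zero] at h1
      have he : ε ^ k = α := mul_right_cancel₀ hk h1
      rw [hα] at he
      have h2 := hpow _ _ he
      rwa [Nat.mod_eq_of_lt hab] at h2
  refine ⟨∑ i ∈ g.support, C (g.coeff i) * X ^ (i / b), ?_⟩
  have key : X ^ a * (∑ i ∈ g.support, C (g.coeff i) * X ^ (i / b)).comp (X ^ b) = g := by
    have hcomp : (∑ i ∈ g.support, C (g.coeff i) * X ^ (i / b)).comp (X ^ b)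
        = ∑ i ∈ g.support, C (g.coeff i) * (X : Polynomial ℂ) ^ (b * (i / b)) := by
      simp [comp, eval₂_finset_sum, eval₂_mul, eval₂_C, eval₂_X_pow, ← pow_mul]
    rw [hcomp, Finset.mul_sum]
    have : ∀ i ∈ g.support, X ^ a * (C (g.coeff i) * (X : Polynomial ℂ) ^ (b * (i / b)))
        = monomial i (g.coeff i) := by
      intro i hi
      have hia : i % b = a := hsupp i (Polynomial.mem_support_iff.mp hi)
      have hieq : a + b * (i / b) = i := by
        have := Nat.div_add_mod i b; omega
      rw [show X ^ a * (C (g.coeff i) * (X : Polynomial ℂ) ^ (b * (i / b)))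
          = C (g.coeff i) * X ^ (a + b * (i / b)) by rw [pow_add]; ring,
        hieq, C_mul_X_pow_eq_monomial]
    rw [Finset.sum_congr rfl this]
    exact (Polynomial.as_sum_support g).symm
  rw [key, hg]; ring
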